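/- For any x,k ≥ 2 and n ≥ x, the number of multisets S = {V₁,...,V_k} of x-element subsets of [n] whose constraint graph H_S is connected is at most n^{kx−2k+2}·k!·(2/x⁴)·(x⁴/(2·x!))^k, where H_S has vertex set {V₁,...,V_k} and edges between V_i, V_j whenever |V_i ∩ V_j| ≥ 2. -/

import Mathlib

/-- A multiset `S` of finsets has a connected constraint graph (where two
members are adjacent iff they share at least two elements) iff every split
of `S` into two nonempty sub-multisets has a crossing pair intersecting in
at least two elements. -/
def ConstraintGraphConnected {n : ℕ} (S : Multiset (Finset (Fin n))) : Prop :=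
  ∀ S₁ S₂ : Multiset (Finset (Fin n)), S₁ + S₂ = S → S₁ ≠ 0 → S₂ ≠ 0 →
    ∃ V ∈ S₁, ∃ W ∈ S₂, 2 ≤ (V ∩ W).card

/-- An exploration ordering: every entry after the first shares at least two
elements with an earlier entry. -/
def GoodL {n : ℕ} (L : List (Finset (Fin n))) : Prop :=
  ∀ i : ℕ, i + 1 < L.length →
    ∃ j : ℕ, j ≤ i ∧ 2 ≤ ((L.getD (i+1) ∅) ∩ (L.getD j ∅)).card

open Finset in
/-- Encode/decode a 2-element subset of the intersection. -/
lemma step_encode {n x : ℕ} (d : Fin n) (A B : Finset (Fin n)) (hA : A.card = x)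
    (hB : B.card = x) (h2 : 2 ≤ (A ∩ B).card) :
    ∃ (t : Finset (Fin x)) (W : Finset (Fin n)), t.card = 2 ∧ W.card = x - 2 ∧
      A = W ∪ t.image (fun p => (B.sort (· ≤ ·)).getD p.1 d) := by
  classical
  obtain ⟨s, hsub, hs2⟩ := Finset.exists_subset_card_eq h2
  have hsA : s ⊆ A := hsub.trans Finset.inter_subset_left
  have hsB : s ⊆ B := hsub.trans Finset.inter_subset_right
  set l := B.sort (· ≤ ·) with hl
  have hlen : l.length = x := by rw [hl, Finset.length_sort, hB]
  have hmem : ∀ a ∈ s, a ∈ l := fun a ha => (Finset.mem_sort _).2 (hsB ha)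
  have hidx : ∀ a ∈ s, l.idxOf a < x := fun a ha => by
    rw [← hlen]; exact List.idxOf_lt_length_iff.2 (hmem a ha)
  refine ⟨s.attach.image (fun a => ⟨l.idxOf a.1, hidx a.1 a.2⟩), A \ s, ?_, ?_, ?_⟩
  · rw [Finset.card_image_of_injective _ ?_, Finset.card_attach, hs2]
    intro a b hab
    have h1 := congrArg Fin.val hab
    simp only at h1
    exact Subtype.ext ((List.idxOf_inj (hmem a.1 a.2)).1 h1)
  · rw [Finset.card_sdiff_of_subset hsA, hA, hs2]
  · rw [Finset.image_image]
    have key : s.attach.image ((fun p : Fin x => l.getD p.1 d) ∘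
        (fun a => (⟨l.idxOf a.1, hidx a.1 a.2⟩ : Fin x))) = s := by
      have h1 : ∀ a : {y // y ∈ s}, l.getD (l.idxOf a.1) d = a.1 := by
        intro a
        have h := hidx a.1 a.2
        rw [← hlen] at h
        rw [List.getD_eq_getElem l d h, List.getElem_idxOf h]
      calc s.attach.image ((fun p : Fin x => l.getD p.1 d) ∘
            (fun a => (⟨l.idxOf a.1, hidx a.1 a.2⟩ : Fin x)))
          = s.attach.image (fun a => a.1) := Finset.image_congr (fun a _ => h1 a)
        _ = s := Finset.attach_image_val
    rw [key, Finset.sdiff_union_of_subset hsA]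

lemma goodL_append {n : ℕ} {L : List (Finset (Fin n))} (hL : GoodL L)
    {V W : Finset (Fin n)} (hV : V ∈ L) (h2 : 2 ≤ (V ∩ W).card) :
    GoodL (L ++ [W]) := by
  intro i hi
  simp only [List.length_append, List.length_singleton] at hi
  rcases lt_or_ge (i+1) L.length with h | h
  · obtain ⟨j, hj, hcard⟩ := hL i h
    refine ⟨j, hj, ?_⟩
    rw [List.getD_append _ _ _ _ h, List.getD_append _ _ _ _ (by omega)]
    exact hcard
  · have hieq : i + 1 = L.length := by omega
    obtain ⟨j, hjlt, hjV⟩ := List.getElem_of_mem hV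
    refine ⟨j, by omega, ?_⟩
    rw [List.getD_append _ _ _ _ hjlt, List.getD_append_right _ _ _ _ (by omega)]
    rw [List.getD_eq_getElem _ _ hjlt, hjV, hieq, Nat.sub_self]
    simpa [Finset.inter_comm] using h2

lemma exists_good_list {n : ℕ} (S : Multiset (Finset (Fin n))) (hS : S ≠ 0)
    (hconn : ConstraintGraphConnected S) :
    ∃ L : List (Finset (Fin n)), (L : Multiset (Finset (Fin n))) = S ∧ GoodL L := by
  classical
  have main : ∀ m (S₂ : Multiset (Finset (Fin n))) (L : List (Finset (Fin n))),
      Multiset.card S₂ = m → L ≠ [] → (L : Multiset (Finset (Fin n))) + S₂ = S → GoodL L →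
      ∃ L' : List (Finset (Fin n)), (L' : Multiset (Finset (Fin n))) = S ∧ GoodL L' := by
    intro m
    induction m with
    | zero =>
      intro S₂ L hm hne hsum hgood
      rw [Multiset.card_eq_zero] at hm
      exact ⟨L, by rw [← hsum, hm, add_zero], hgood⟩
    | succ m ih =>
      intro S₂ L hm hne hsum hgood
      have hS₂ : S₂ ≠ 0 := by
        intro h; rw [h] at hm; simp at hm
      have hLne : (L : Multiset (Finset (Fin n))) ≠ 0 := by
        simpa using hne
      obtain ⟨V, hV, W, hW, h2⟩ := hconn _ _ hsum hLne hS₂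
      refine ih (S₂.erase W) (L ++ [W]) ?_ (by simp) ?_ ?_
      · rw [Multiset.card_erase_of_mem hW, hm]; rfl
      · rw [← Multiset.coe_add, add_assoc,
          show ((↑[W] : Multiset (Finset (Fin n))) + S₂.erase W) = S₂ by
            rw [Multiset.coe_singleton, Multiset.singleton_add, Multiset.cons_erase hW]]
        exact hsum
      · exact goodL_append hgood (by simpa using hV) h2
  obtain ⟨V, hV⟩ := Multiset.exists_mem_of_ne_zero hS
  refine main (Multiset.card (S.erase V)) (S.erase V) [V] rfl (by simp) ?_ ?_
  · simpa [Multiset.singleton_add] using Multiset.cons_erase hV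
  · intro i hi; simp at hi

lemma real_calc (z F : ℝ) (hz : z ≠ 0) (hF : F ≠ 0) (b : ℕ) :
    (2 / z) * (z / (2*F))^(b+2) = z^(b+1) / (F^(b+2) * 2^(b+1)) := by
  rw [div_pow, mul_pow, pow_succ z (b+1), pow_succ (2:ℝ) (b+1)]
  field_simp

lemma numeric_bound (n a b : ℕ) :
    (((n.choose (a+2) * ((b+1).factorial * ((a+2).choose 2 * n.choose a) ^ (b+1))) : ℕ) : ℝ) ≤
      (n : ℝ) ^ ((b+2) * (a+2) - 2 * (b+2) + 2) * ((b+2).factorial : ℝ) *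
        (2 / ((a+2 : ℕ) : ℝ) ^ 4) *
        (((a+2 : ℕ) : ℝ) ^ 4 / (2 * ((a+2).factorial : ℝ))) ^ (b+2) := by
  have hE : (b+2) * (a+2) - 2 * (b+2) + 2 = a*b + 2*a + 2 := by
    have h1 : (b+2)*(a+2) = a*b + 2*b + 2*a + 4 := by ring
    rw [h1]; generalize a*b = c; omega
  rw [hE]
  have f1 : n.choose (a+2) * (a+2).factorial ≤ n ^ (a+2) := by
    rw [mul_comm, ← Nat.descFactorial_eq_factorial_mul_choose]
    exact Nat.descFactorial_le_pow n (a+2)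
  have f3 : n.choose a * a.factorial ≤ n ^ a := by
    rw [mul_comm, ← Nat.descFactorial_eq_factorial_mul_choose]
    exact Nat.descFactorial_le_pow n a
  have f2 : 2 * (a+2).choose 2 ≤ (a+2) * (a+2) := by
    rw [Nat.choose_two_right]
    calc 2 * ((a+2) * (a+2-1) / 2) ≤ (a+2) * (a+2-1) := by
          rw [mul_comm]; exact Nat.div_mul_le_self _ _
      _ ≤ (a+2) * (a+2) := Nat.mul_le_mul_left _ (by omega)
  have f4 : (a+2).factorial = (a+2) * (a+1) * a.factorial := by
    rw [Nat.factorial_succ, Nat.factorial_succ]; ring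
  have base : ((a+2).choose 2 * n.choose a) * ((a+2).factorial * 2) ≤ n ^ a * ((a+2)^4) := by
    calc ((a+2).choose 2 * n.choose a) * ((a+2).factorial * 2)
        = (2 * (a+2).choose 2) * ((a+2)*(a+1)) * (n.choose a * a.factorial) := by
          rw [f4]; ring
      _ ≤ ((a+2)*(a+2)) * ((a+2)*(a+2)) * n^a := by
          have h5 : (a+2)*(a+1) ≤ (a+2)*(a+2) := Nat.mul_le_mul_left _ (by omega)
          exact Nat.mul_le_mul (Nat.mul_le_mul f2 h5) f3
      _ = n ^ a * ((a+2)^4) := by ring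
  have hNat : (n.choose (a+2) * ((b+1).factorial * ((a+2).choose 2 * n.choose a) ^ (b+1)))
      * ((a+2).factorial ^ (b+2) * 2 ^ (b+1))
      ≤ n ^ (a*b + 2*a + 2) * (b+2).factorial * ((a+2)^4) ^ (b+1) := by
    calc (n.choose (a+2) * ((b+1).factorial * ((a+2).choose 2 * n.choose a) ^ (b+1)))
          * ((a+2).factorial ^ (b+2) * 2 ^ (b+1))
        = (n.choose (a+2) * (a+2).factorial) *
          ((b+1).factorial *
            (((a+2).choose 2 * n.choose a) * ((a+2).factorial * 2)) ^ (b+1)) := by ring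
      _ ≤ n ^ (a+2) * ((b+2).factorial * (n ^ a * ((a+2)^4)) ^ (b+1)) := by
          refine Nat.mul_le_mul f1 (Nat.mul_le_mul ?_ (Nat.pow_le_pow_left base _))
          exact Nat.factorial_le (by omega)
      _ = n ^ (a*b + 2*a + 2) * (b+2).factorial * ((a+2)^4) ^ (b+1) := by
          rw [mul_pow, ← pow_mul,
            show a*b + 2*a + 2 = (a+2) + a*(b+1) by ring, pow_add]
          ring
  have hz0 : (((a+2) : ℕ) : ℝ) ^ 4 ≠ 0 := by positivity
  have hf0 : (((a+2).factorial : ℕ) : ℝ) ≠ 0 := by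
    exact_mod_cast (Nat.factorial_pos _).ne'
  calc (((n.choose (a+2) * ((b+1).factorial * ((a+2).choose 2 * n.choose a) ^ (b+1))) : ℕ) : ℝ)
      ≤ ((n ^ (a*b + 2*a + 2) * (b+2).factorial * ((a+2)^4) ^ (b+1) : ℕ) : ℝ) /
        (((a+2).factorial ^ (b+2) * 2 ^ (b+1) : ℕ) : ℝ) := by
        rw [le_div_iff₀ (by positivity)]
        exact_mod_cast hNat
    _ = (n : ℝ) ^ (a*b + 2*a + 2) * ((b+2).factorial : ℝ) *
        (2 / ((a+2 : ℕ) : ℝ) ^ 4) *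
        (((a+2 : ℕ) : ℝ) ^ 4 / (2 * ((a+2).factorial : ℝ))) ^ (b+2) := by
        rw [show (n : ℝ) ^ (a*b + 2*a + 2) * ((b+2).factorial : ℝ) *
            (2 / ((a+2 : ℕ) : ℝ) ^ 4) *
            (((a+2 : ℕ) : ℝ) ^ 4 / (2 * ((a+2).factorial : ℝ))) ^ (b+2)
          = (n : ℝ) ^ (a*b + 2*a + 2) * ((b+2).factorial : ℝ) *
            ((2 / ((a+2 : ℕ) : ℝ) ^ 4) *
             ((((a+2 : ℕ) : ℝ) ^ 4) / (2 * ((a+2).factorial : ℝ))) ^ (b+2)) by ring,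
          real_calc _ _ hz0 hf0 b]
        push_cast
        ring

/-- Lemma: for `x, k ≥ 2` and `n ≥ x`, the number of multisets of `k`
`x`-element subsets of `[n]` whose constraint graph is connected is at most
`n^{kx−2k+2}·k!·(2/x⁴)·(x⁴/(2·x!))^k`. -/
theorem count_connected_multisets (n x k : ℕ) (hx : 2 ≤ x) (hk : 2 ≤ k)
    (hn : x ≤ n) :
    (Nat.card {S : Multiset (Finset (Fin n)) //
        Multiset.card S = k ∧ (∀ V ∈ S, V.card = x) ∧
        ConstraintGraphConnected S} : ℝ) ≤
      (n : ℝ) ^ (k * x - 2 * k + 2) * (k.factorial : ℝ) *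
        (2 / (x : ℝ) ^ 4) *
        ((x : ℝ) ^ 4 / (2 * (x.factorial : ℝ))) ^ k := by
  classical
  have hn2 : 2 ≤ n := hx.trans hn
  set d : Fin n := ⟨0, by omega⟩ with hd
  set Sub := {S : Multiset (Finset (Fin n)) //
        Multiset.card S = k ∧ (∀ V ∈ S, V.card = x) ∧ ConstraintGraphConnected S} with hSub
  set T := ({V : Finset (Fin n) // V.card = x} ×
      ((i : Fin (k-1)) → Fin (i.1+1) × {s : Finset (Fin x) // s.card = 2} ×
        {W : Finset (Fin n) // W.card = x - 2})) with hT
  have master : ∀ s : Sub, ∃ g : T, ∃ L : List (Finset (Fin n)),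
      (L : Multiset (Finset (Fin n))) = s.1 ∧ L.getD 0 ∅ = g.1.1 ∧
      ∀ i : Fin (k-1), L.getD (i.1+1) ∅ =
        (g.2 i).2.2.1 ∪ ((g.2 i).2.1.1.image
          fun p => ((L.getD (g.2 i).1.1 ∅).sort (· ≤ ·)).getD p.1 d) := by
    rintro ⟨S, hkcard, hmemx, hconn⟩
    have hS0 : S ≠ 0 := by
      intro h; rw [h] at hkcard; simp at hkcard; omega
    obtain ⟨L, hLS, hgood⟩ := exists_good_list S hS0 hconn
    have hlen : L.length = k := by
      rw [← Multiset.coe_card, hLS, hkcard]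
    have hcardi : ∀ i, i < k → (L.getD i ∅).card = x := by
      intro i hi
      apply hmemx
      rw [← hLS, List.getD_eq_getElem _ _ (hlen ▸ hi)]
      exact Multiset.mem_coe.2 (List.getElem_mem _)
    have step : ∀ i : Fin (k-1), ∃ (j : Fin (i.1+1)) (t : Finset (Fin x))
        (W : Finset (Fin n)), t.card = 2 ∧ W.card = x - 2 ∧
        L.getD (i.1+1) ∅ = W ∪ t.image
          (fun p => ((L.getD j.1 ∅).sort (· ≤ ·)).getD p.1 d) := by
      intro i
      have hik : i.1 < k - 1 := i.2
      have hi1 : i.1 + 1 < L.length := by rw [hlen]; omega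
      obtain ⟨j, hj, h2⟩ := hgood i.1 hi1
      obtain ⟨t, W, ht, hW, hdec⟩ :=
        step_encode d _ _ (hcardi _ (by omega)) (hcardi j (by omega)) h2
      exact ⟨⟨j, by omega⟩, t, W, ht, hW, hdec⟩
    choose j t W ht hW hdec using step
    exact ⟨⟨⟨L.getD 0 ∅, hcardi 0 (by omega)⟩,
      fun i => (j i, ⟨t i, ht i⟩, ⟨W i, hW i⟩)⟩, L, hLS, rfl, fun i => hdec i⟩
  set f : Sub → T := fun s => (master s).choose with hf
  have hinj : Function.Injective f := by
    intro a b hab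
    obtain ⟨La, hLa, ha0, haS⟩ := (master a).choose_spec
    obtain ⟨Lb, hLb, hb0, hbS⟩ := (master b).choose_spec
    have hlena : La.length = k := by rw [← Multiset.coe_card, hLa, a.2.1]
    have hlenb : Lb.length = k := by rw [← Multiset.coe_card, hLb, b.2.1]
    have hfab : (master a).choose = (master b).choose := hab
    have key : ∀ i, i < k → La.getD i ∅ = Lb.getD i ∅ := by
      intro i
      induction i using Nat.strong_induction_on with
      | _ i ih =>
        intro hik
        match i with
        | 0 => rw [ha0, hb0, hfab]
        | (i+1) =>
          have hik' : i < k - 1 := by omega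
          have hjb : (((master b).choose.2 ⟨i, hik'⟩).1 : Fin (i+1)).1 < i + 1 :=
            (((master b).choose.2 ⟨i, hik'⟩).1).2
          rw [haS ⟨i, hik'⟩, hbS ⟨i, hik'⟩, hfab,
            ih ((master b).choose.2 ⟨i, hik'⟩).1.1 (by omega) (by omega)]
    have hLab : La = Lb := by
      apply List.ext_getElem (by rw [hlena, hlenb])
      intro i h1 h2
      have := key i (by omega)
      rwa [List.getD_eq_getElem _ _ h1, List.getD_eq_getElem _ _ h2] at this
    exact Subtype.ext (by rw [← hLa, ← hLb, hLab])
  have hcard : Nat.card Sub ≤ Nat.card T := Nat.card_le_card_of_injective f hinj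
  have hTcard : Nat.card T =
      n.choose x * ((k-1).factorial * (x.choose 2 * n.choose (x-2)) ^ (k-1)) := by
    rw [hT, Nat.card_eq_fintype_card, Fintype.card_prod, Fintype.card_pi]
    congr 1
    · simp [Fintype.card_finset_len]
    · calc ∏ i : Fin (k-1), Fintype.card (Fin (i.1+1) ×
            {s : Finset (Fin x) // s.card = 2} × {W : Finset (Fin n) // W.card = x - 2})
          = ∏ i : Fin (k-1), ((i.1+1) * (x.choose 2 * n.choose (x-2))) := by
            apply Finset.prod_congr rfl
            intro i _
            simp [Fintype.card_prod, Fintype.card_finset_len]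
        _ = (∏ i : Fin (k-1), (i.1+1)) * (x.choose 2 * n.choose (x-2)) ^ (k-1) := by
            rw [Finset.prod_mul_distrib, Finset.prod_const, Finset.card_univ,
              Fintype.card_fin]
        _ = (k-1).factorial * (x.choose 2 * n.choose (x-2)) ^ (k-1) := by
            rw [Fin.prod_univ_eq_prod_range (fun i => i + 1),
              Finset.prod_range_add_one_eq_factorial]
  obtain ⟨a, rfl⟩ : ∃ a, x = a + 2 := ⟨x - 2, by omega⟩
  obtain ⟨b, rfl⟩ : ∃ b, k = b + 2 := ⟨k - 2, by omega⟩
  have hsimp1 : b + 2 - 1 = b + 1 := by omega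
  have hsimp2 : a + 2 - 2 = a := by omega
  rw [hsimp1, hsimp2] at hTcard
  calc (Nat.card Sub : ℝ)
      ≤ ((n.choose (a+2) * ((b+1).factorial * ((a+2).choose 2 * n.choose a) ^ (b+1)) : ℕ) : ℝ) := by
        exact_mod_cast hTcard ▸ hcard
    _ ≤ (n : ℝ) ^ ((b+2) * (a+2) - 2 * (b+2) + 2) * ((b+2).factorial : ℝ) *
        (2 / ((a+2 : ℕ) : ℝ) ^ 4) *
        (((a+2 : ℕ) : ℝ) ^ 4 / (2 * ((a+2).factorial : ℝ))) ^ (b+2) := numeric_bound n a b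
    _ = (n : ℝ) ^ ((b+2) * (a+2) - 2 * (b+2) + 2) * ((b+2).factorial : ℝ) *
        (2 / ((a+2 : ℕ) : ℝ) ^ 4) *
        (((a+2 : ℕ) : ℝ) ^ 4 / (2 * (((a+2).factorial : ℕ) : ℝ))) ^ (b+2) := by norm_cast
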